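/- arXiv:2105.03613 — 7 statements merged into one kernel-verified Lean document; each statement's English description precedes it below -/
import Mathlib

section
/- Let γ ∈ (0, 1/2), α ∈ (−1/2 + γ, 0), and set H = α − γ + 1/2. For all v > 0 and s ≥ 0, the quantity ∫_0^v ((s+x)^α − x^α)^2 x^{−2γ} dx + ∫_0^{min(v,s)} (s−x)^{2α} x^{−2γ} dx is at most (1/(2α−2γ+1) + B(2α+1, 1−2γ)) · v^{2H}, where B denotes the Beta function. -/
open MeasureTheory intervalIntegral Set

lemma betaMeas (c p q : ℝ) : Measurable (fun x : ℝ => (c - x) ^ p * x ^ q) := by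
  fun_prop

lemma betaIntegrable {p q c : ℝ} (hp : -1 < p) (hp0 : p ≤ 0) (hq : -1 < q) (hq0 : q ≤ 0)
    (hc : 0 < c) : IntervalIntegrable (fun x : ℝ => (c - x) ^ p * x ^ q) volume 0 c := by
  have hm : AEStronglyMeasurable (fun x : ℝ => (c - x) ^ p * x ^ q) volume :=
    (betaMeas c p q).aestronglyMeasurable
  have h1 : IntervalIntegrable (fun x : ℝ => (c - x) ^ p * x ^ q) volume 0 (c/2) := by
    refine ((intervalIntegrable_rpow' (a := 0) (b := c/2) hq).const_mul ((c/2) ^ p)).mono_fun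
      hm.restrict ?_
    filter_upwards [ae_restrict_mem measurableSet_uIoc] with x hx
    rw [uIoc_of_le (by linarith)] at hx
    have hx0 : 0 < x := hx.1
    have hcx : c / 2 ≤ c - x := by linarith [hx.2]
    have h0 : (0:ℝ) ≤ (c - x) ^ p * x ^ q :=
      mul_nonneg (Real.rpow_nonneg (by linarith) _) (Real.rpow_nonneg hx0.le _)
    rw [Real.norm_of_nonneg h0, Real.norm_of_nonneg
      (mul_nonneg (Real.rpow_nonneg (by positivity) _) (Real.rpow_nonneg hx0.le _))]
    exact mul_le_mul_of_nonneg_right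
      (Real.rpow_le_rpow_of_nonpos (by positivity) hcx hp0) (Real.rpow_nonneg hx0.le _)
  have h2 : IntervalIntegrable (fun x : ℝ => (c - x) ^ p * x ^ q) volume (c/2) c := by
    have base : IntervalIntegrable (fun x : ℝ => (c - x) ^ p) volume (c - c/2) (c - 0) :=
      (intervalIntegrable_rpow' (a := c/2) (b := 0) hp).comp_sub_left c
    rw [show c - c/2 = c/2 by ring, sub_zero] at base
    refine (base.const_mul ((c/2) ^ q)).mono_fun hm.restrict ?_
    filter_upwards [ae_restrict_mem measurableSet_uIoc] with x hx
    rw [uIoc_of_le (by linarith)] at hx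
    have hx0 : 0 < x := lt_of_lt_of_le (by linarith) hx.1.le
    have hcx : 0 ≤ c - x := by linarith [hx.2]
    have h0 : (0:ℝ) ≤ (c - x) ^ p * x ^ q :=
      mul_nonneg (Real.rpow_nonneg hcx _) (Real.rpow_nonneg hx0.le _)
    rw [Real.norm_of_nonneg h0, Real.norm_of_nonneg
      (mul_nonneg (Real.rpow_nonneg (by positivity) _) (Real.rpow_nonneg hcx _))]
    rw [mul_comm ((c/2 : ℝ) ^ q)]
    exact mul_le_mul_of_nonneg_left
      (Real.rpow_le_rpow_of_nonpos (by positivity) hx.1.le hq0) (Real.rpow_nonneg hcx _)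
  exact h1.trans h2

lemma betaEval {p q : ℝ} (c : ℝ) (hc : 0 < c) :
    ∫ x in (0:ℝ)..c, (c - x) ^ p * x ^ q
      = c ^ (p + q + 1) * ∫ t in (0:ℝ)..1, (1 - t) ^ p * t ^ q := by
  have key := integral_comp_mul_right (a := (0:ℝ)) (b := 1)
    (fun x : ℝ => (c - x) ^ p * x ^ q) (ne_of_gt hc)
  simp only [zero_mul, one_mul, smul_eq_mul] at key
  have congr1 : (∫ x in (0:ℝ)..1, (c - x * c) ^ p * (x * c) ^ q)
      = ∫ x in (0:ℝ)..1, c ^ (p + q) * ((1 - x) ^ p * x ^ q) := by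
    refine intervalIntegral.integral_congr fun x hx => ?_
    rw [uIcc_of_le (by norm_num)] at hx
    have hx0 : 0 ≤ x := hx.1
    have hx1 : x ≤ 1 := hx.2
    have e1 : c - x * c = c * (1 - x) := by ring
    rw [e1, Real.mul_rpow hc.le (by linarith), mul_comm x c,
      Real.mul_rpow hc.le hx0, Real.rpow_add hc]
    ring
  rw [congr1, intervalIntegral.integral_const_mul] at key
  have : (∫ x in (0:ℝ)..c, (c - x) ^ p * x ^ q)
      = c * (c ^ (p + q) * ∫ x in (0:ℝ)..1, (1 - x) ^ p * x ^ q) := by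
    rw [key]; field_simp
  rw [this, Real.rpow_add hc (p + q) 1, Real.rpow_one]; ring

lemma betaFlip (p q : ℝ) :
    (∫ t in (0:ℝ)..1, (1 - t) ^ p * t ^ q) = ∫ t in (0:ℝ)..1, t ^ p * (1 - t) ^ q := by
  have key := integral_comp_sub_left (a := (0:ℝ)) (b := 1)
    (fun t : ℝ => t ^ p * (1 - t) ^ q) 1
  norm_num at key
  rw [← key]

/-- The real Beta function as an integral. -/
noncomputable def realBeta (a b : ℝ) : ℝ := ∫ t in (0:ℝ)..1, t ^ (a - 1) * (1 - t) ^ (b - 1)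

theorem stmt3 (γ α : ℝ) (hγ : 0 < γ) (hγ' : γ < 1/2)
    (hα1 : -1/2 + γ < α) (hα2 : α < 0)
    (H : ℝ) (hH : H = α - γ + 1/2)
    (v s : ℝ) (hv : 0 < v) (hs : 0 ≤ s) :
    (∫ x in (0:ℝ)..v, ((s + x) ^ α - x ^ α) ^ 2 * x ^ (-2 * γ)) +
      (∫ x in (0:ℝ)..(min v s), (s - x) ^ (2 * α) * x ^ (-2 * γ)) ≤
      (1 / (2 * α - 2 * γ + 1) + realBeta (2 * α + 1) (1 - 2 * γ)) * v ^ (2 * H) := by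
  subst hH
  have hp : (-1:ℝ) < 2*α := by linarith
  have hp0 : 2*α ≤ 0 := by linarith
  have hq : (-1:ℝ) < -2*γ := by linarith
  have hq0 : -2*γ ≤ 0 := by linarith
  have hE : (0:ℝ) < 2*α - 2*γ + 1 := by linarith
  have hBnn : 0 ≤ realBeta (2*α+1) (1-2*γ) := by
    unfold realBeta
    refine intervalIntegral.integral_nonneg (by norm_num) fun t ht => ?_
    exact mul_nonneg (Real.rpow_nonneg ht.1 _) (Real.rpow_nonneg (by linarith [ht.2]) _)
  have hβ : (∫ t in (0:ℝ)..1, (1-t) ^ (2*α) * t ^ (-2*γ)) = realBeta (2*α+1) (1-2*γ) := by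
    rw [betaFlip (2*α) (-2*γ)]
    unfold realBeta
    refine intervalIntegral.integral_congr fun t ht => ?_
    norm_num
  -- first integral
  have hIg : IntervalIntegrable (fun x : ℝ => x ^ (2*α - 2*γ)) volume 0 v :=
    intervalIntegrable_rpow' (by linarith)
  have hf1m : AEStronglyMeasurable (fun x : ℝ => ((s+x)^α - x^α)^2 * x ^ (-2*γ)) volume := by
    have : Measurable (fun x : ℝ => ((s+x)^α - x^α)^2 * x ^ (-2*γ)) := by fun_prop
    exact this.aestronglyMeasurable
  have hbound : ∀ x ∈ Set.Ioc (0:ℝ) v, ((s+x)^α - x^α)^2 * x ^ (-2*γ) ≤ x ^ (2*α-2*γ) := by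
    intro x hx
    have hx0 : 0 < x := hx.1
    have hBA : (s+x)^α ≤ x^α := Real.rpow_le_rpow_of_nonpos hx0 (by linarith) hα2.le
    have hA0 : 0 ≤ (s+x)^α := Real.rpow_nonneg (by linarith) _
    have hsq : ((s+x)^α - x^α)^2 ≤ (x^α)^2 := by
      rw [show ((s+x)^α - x^α)^2 = (x^α - (s+x)^α)^2 by ring]
      exact pow_le_pow_left₀ (by linarith) (by linarith) 2
    calc ((s+x)^α - x^α)^2 * x^(-2*γ) ≤ (x^α)^2 * x^(-2*γ) :=
          mul_le_mul_of_nonneg_right hsq (Real.rpow_nonneg hx0.le _)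
      _ = x ^ (2*α-2*γ) := by
          rw [sq, ← Real.rpow_add hx0, ← Real.rpow_add hx0,
            show α + α + -2*γ = 2*α-2*γ by ring]
  have hIf1 : IntervalIntegrable (fun x : ℝ => ((s+x)^α - x^α)^2 * x ^ (-2*γ)) volume 0 v := by
    refine hIg.mono_fun hf1m.restrict ?_
    filter_upwards [ae_restrict_mem measurableSet_uIoc] with x hx
    rw [Set.uIoc_of_le hv.le] at hx
    have h0 : 0 ≤ ((s+x)^α - x^α)^2 * x ^ (-2*γ) :=
      mul_nonneg (sq_nonneg _) (Real.rpow_nonneg hx.1.le _)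
    rw [Real.norm_of_nonneg h0, Real.norm_of_nonneg (Real.rpow_nonneg hx.1.le _)]
    exact hbound x hx
  have hI1 : (∫ x in (0:ℝ)..v, ((s+x)^α - x^α)^2 * x ^ (-2*γ))
      ≤ v ^ (2*α-2*γ+1) / (2*α-2*γ+1) := by
    have hmono := intervalIntegral.integral_mono_on hv.le hIf1 hIg (fun x hx => by
      rcases eq_or_lt_of_le hx.1 with h|h
      · rw [← h, Real.zero_rpow (ne_of_lt (show -2*γ < 0 by linarith)), mul_zero,
          Real.zero_rpow (ne_of_lt (show 2*α-2*γ < 0 by linarith))]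
      · exact hbound x ⟨h, hx.2⟩)
    refine hmono.trans ?_
    rw [integral_rpow (Or.inl (by linarith)),
      Real.zero_rpow (show 2*α-2*γ+1 ≠ 0 by linarith), sub_zero]
  -- second integral
  set m := min v s with hm
  have hm0 : 0 ≤ m := le_min hv.le hs
  have hmv : m ≤ v := min_le_left _ _
  have hms : m ≤ s := min_le_right _ _
  have hI2 : (∫ x in (0:ℝ)..m, (s-x)^(2*α) * x^(-2*γ))
      ≤ realBeta (2*α+1) (1-2*γ) * v^(2*α-2*γ+1) := by
    rcases eq_or_lt_of_le hm0 with h0|h0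
    · rw [← h0, intervalIntegral.integral_same]
      exact mul_nonneg hBnn (Real.rpow_nonneg hv.le _)
    · have hs0 : 0 < s := lt_of_lt_of_le h0 hms
      have hfInt : IntervalIntegrable (fun x : ℝ => (s-x)^(2*α) * x^(-2*γ)) volume 0 m :=
        (betaIntegrable hp hp0 hq hq0 hs0).mono_set'
          (by rw [Set.uIoc_of_le hm0, Set.uIoc_of_le hs0.le]
              exact Set.Ioc_subset_Ioc_right hms)
      have hgInt : IntervalIntegrable (fun x : ℝ => (m-x)^(2*α) * x^(-2*γ)) volume 0 m :=
        betaIntegrable hp hp0 hq hq0 h0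
      have hne : ∀ᵐ (x : ℝ), x ≠ m := by
        rw [ae_iff]
        simp [Real.volume_singleton]
      have hmono : (∫ x in (0:ℝ)..m, (s-x)^(2*α) * x^(-2*γ))
          ≤ ∫ x in (0:ℝ)..m, (m-x)^(2*α) * x^(-2*γ) := by
        refine intervalIntegral.integral_mono_ae_restrict hm0 hfInt hgInt ?_
        filter_upwards [ae_restrict_mem measurableSet_Icc, ae_restrict_of_ae hne] with x hx hxm
        have hxm' : x < m := lt_of_le_of_ne hx.2 hxm
        exact mul_le_mul_of_nonneg_right
          (Real.rpow_le_rpow_of_nonpos (by linarith) (by linarith) hp0)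
          (Real.rpow_nonneg hx.1 _)
      calc (∫ x in (0:ℝ)..m, (s-x)^(2*α) * x^(-2*γ))
          ≤ ∫ x in (0:ℝ)..m, (m-x)^(2*α) * x^(-2*γ) := hmono
        _ = m ^ (2*α + -2*γ + 1) * ∫ t in (0:ℝ)..1, (1-t)^(2*α) * t^(-2*γ) := betaEval m h0
        _ = realBeta (2*α+1) (1-2*γ) * m ^ (2*α + -2*γ + 1) := by rw [hβ]; ring
        _ ≤ realBeta (2*α+1) (1-2*γ) * v ^ (2*α-2*γ+1) := by
            rw [show 2*α + -2*γ + 1 = 2*α-2*γ+1 by ring]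
            exact mul_le_mul_of_nonneg_left
              (Real.rpow_le_rpow hm0 hmv (by linarith)) hBnn
  rw [show (2:ℝ) * (α - γ + 1/2) = 2*α-2*γ+1 by ring]
  calc (∫ x in (0:ℝ)..v, ((s + x) ^ α - x ^ α) ^ 2 * x ^ (-2 * γ)) +
        (∫ x in (0:ℝ)..m, (s - x) ^ (2 * α) * x ^ (-2 * γ))
      ≤ v ^ (2*α-2*γ+1) / (2*α-2*γ+1) + realBeta (2*α+1) (1-2*γ) * v^(2*α-2*γ+1) :=
        add_le_add hI1 hI2
    _ = (1 / (2 * α - 2 * γ + 1) + realBeta (2 * α + 1) (1 - 2 * γ)) * v ^ (2*α-2*γ+1) := by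
        ring
end

section
/- Let H ∈ (0, 1), β > 0, and let φ : (0, ∞) → (0, 1] be non-decreasing such that θ ↦ θ^{−1/β} φ(θ) is increasing on (0, θ₀) for some θ₀ > 0 and inf{φ(θ)/θ^{1/β} : θ₀ ≤ θ ≤ C} > 0 for every C > 0. Let ξ : (0, e^{−e}] → (0, ∞) be nondecreasing continuous with ξ(t)/t^H bounded, and suppose ∫_0^{e^{−e}} (ξ(t)/t^H)^{−1/β} φ(ξ(t)/t^H) dt/t < ∞. Then lim_{t→0+} ξ(t)/t^H = 0. -/
open MeasureTheory Real Filter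

theorem stmt12 (H β θ₀ : ℝ) (hH : H ∈ Set.Ioo (0:ℝ) 1) (hβ : 0 < β) (hθ₀ : 0 < θ₀)
    (φ : ℝ → ℝ)
    (hφrange : ∀ θ : ℝ, 0 < θ → φ θ ∈ Set.Ioc (0:ℝ) 1)
    (hφmono : MonotoneOn φ (Set.Ioi (0:ℝ)))
    (hφinc : StrictMonoOn (fun θ : ℝ => θ ^ (-1 / β) * φ θ) (Set.Ioo 0 θ₀))
    (hinf : ∀ C : ℝ, 0 < C → ∃ m : ℝ, 0 < m ∧ ∀ θ ∈ Set.Icc θ₀ C, m ≤ φ θ / θ ^ (1 / β))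
    (ξ : ℝ → ℝ)
    (hξpos : ∀ t ∈ Set.Ioc (0:ℝ) (exp (-exp 1)), 0 < ξ t)
    (hξmono : MonotoneOn ξ (Set.Ioc (0:ℝ) (exp (-exp 1))))
    (hξcont : ContinuousOn ξ (Set.Ioc (0:ℝ) (exp (-exp 1))))
    (hbdd : ∃ C : ℝ, ∀ t ∈ Set.Ioc (0:ℝ) (exp (-exp 1)), ξ t / t ^ H ≤ C)
    (hint : IntegrableOn
      (fun t : ℝ => (ξ t / t ^ H) ^ (-1 / β) * φ (ξ t / t ^ H) / t)
      (Set.Ioc 0 (exp (-exp 1)))) :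
    Tendsto (fun t : ℝ => ξ t / t ^ H) (nhdsWithin 0 (Set.Ioi 0)) (nhds 0) := by
  obtain ⟨hH0, hH1⟩ := hH
  set T : ℝ := exp (-exp 1) with hTdef
  have hT0 : 0 < T := exp_pos _
  set g : ℝ → ℝ := fun t => ξ t / t ^ H with hg
  set f : ℝ → ℝ := fun t => (g t) ^ (-1/β) * φ (g t) / t with hf
  have hg_pos : ∀ t ∈ Set.Ioc (0:ℝ) T, 0 < g t := by
    intro t ht
    exact div_pos (hξpos t ht) (rpow_pos_of_pos ht.1 H)
  have hf_nonneg : ∀ t ∈ Set.Ioc (0:ℝ) T, 0 ≤ f t := by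
    intro t ht
    have h1 := hg_pos t ht
    have h2 := (hφrange _ h1).1
    have h3 : 0 < t := ht.1
    positivity
  obtain ⟨C₀, hC₀⟩ := hbdd
  set C : ℝ := max C₀ θ₀ with hC
  have hCpos : 0 < C := lt_of_lt_of_le hθ₀ (le_max_right _ _)
  obtain ⟨m, hm, hmle⟩ := hinf C hCpos
  by_contra hcon
  rw [Metric.tendsto_nhdsWithin_nhds] at hcon
  push_neg at hcon
  obtain ⟨ε, hε, hfar⟩ := hcon
  -- constants
  set ε' : ℝ := ε / (2:ℝ) ^ H with hε'def
  have hε'pos : 0 < ε' := div_pos hε (rpow_pos_of_pos two_pos H)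
  set a : ℝ := min ε' (θ₀/2) with ha
  have hapos : 0 < a := lt_min hε'pos (by linarith)
  have ha_mem : a ∈ Set.Ioo (0:ℝ) θ₀ := ⟨hapos, lt_of_le_of_lt (min_le_right _ _) (by linarith)⟩
  set c : ℝ := min (a ^ (-1/β) * φ a) m with hc
  have hcpos : 0 < c := lt_min (mul_pos (rpow_pos_of_pos hapos _) (hφrange a hapos).1) hm
  -- key lower bound on F (g u)
  have hF : ∀ u ∈ Set.Ioc (0:ℝ) T, ε' ≤ g u → c ≤ (g u) ^ (-1/β) * φ (g u) := by
    intro u hu hgu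
    have hgu0 : 0 < g u := hg_pos u hu
    by_cases hcase : g u < θ₀
    · have hguIoo : g u ∈ Set.Ioo (0:ℝ) θ₀ := ⟨hgu0, hcase⟩
      have hale : a ≤ g u := le_trans (min_le_left _ _) hgu
      have := (hφinc.monotoneOn) ha_mem hguIoo hale
      exact le_trans (min_le_left _ _) this
    · push_neg at hcase
      have hguC : g u ≤ C := le_trans (hC₀ u hu) (le_max_left _ _)
      have hmm := hmle (g u) ⟨hcase, hguC⟩
      have heq : (g u) ^ (-1/β) * φ (g u) = φ (g u) / (g u) ^ (1/β) := by
        rw [neg_div, rpow_neg hgu0.le, div_eq_mul_inv, mul_comm, div_eq_mul_inv]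
      rw [heq]
      exact le_trans (min_le_right _ _) hmm
  -- Step A : lower bound c * log 2 for the integral over (0, δ]
  have stepA : ∀ δ : ℝ, 0 < δ → δ ≤ T → c * Real.log 2 ≤ ∫ u in Set.Ioc (0:ℝ) δ, f u := by
    intro δ hδ0 hδT
    obtain ⟨t, ht0', htδ, htε⟩ := hfar (δ/2) (by linarith)
    have ht0 : 0 < t := ht0'
    rw [Real.dist_eq, sub_zero, abs_of_pos ht0] at htδ
    have htT : t ∈ Set.Ioc (0:ℝ) T := ⟨ht0, by linarith⟩
    have hgt : ε ≤ g t := by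
      rw [Real.dist_eq, sub_zero, abs_of_pos (hg_pos t htT)] at htε
      exact htε
    have hsub : Set.Ioc t (2*t) ⊆ Set.Ioc (0:ℝ) δ := by
      intro u hu
      exact ⟨lt_trans ht0 hu.1, le_trans hu.2 (by linarith)⟩
    have hsubT : Set.Ioc t (2*t) ⊆ Set.Ioc (0:ℝ) T :=
      fun u hu => ⟨(hsub hu).1, le_trans (hsub hu).2 hδT⟩
    -- pointwise bound on Ioc t 2t
    have hptwise : ∀ u ∈ Set.Ioc t (2*t), c / u ≤ f u := by
      intro u hu
      have huT := hsubT hu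
      have hu0 : 0 < u := huT.1
      -- g u ≥ ε'
      have hξmono' : ξ t ≤ ξ u := hξmono htT huT hu.1.le
      have hrp : u ^ H ≤ (2*t) ^ H := rpow_le_rpow hu0.le hu.2 hH0.le
      have h2t : (0:ℝ) < (2*t) ^ H := rpow_pos_of_pos (by linarith) H
      have hstep1 : ξ t / (2*t) ^ H ≤ ξ u / u ^ H := by
        apply div_le_div₀ (hξpos u huT).le hξmono' (rpow_pos_of_pos hu0 H) hrp
      have hstep2 : ε' ≤ ξ t / (2*t) ^ H := by
        have h2H : (2*t) ^ H = 2 ^ H * t ^ H := mul_rpow (by norm_num) ht0.le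
        have hq : ξ t / (2*t) ^ H = g t / 2 ^ H := by
          rw [h2H, hg]
          rw [div_div, mul_comm]
        rw [hq, hε'def]
        apply div_le_div_of_nonneg_right hgt (rpow_pos_of_pos two_pos H).le
      have hgu : ε' ≤ g u := le_trans hstep2 hstep1
      have hcF := hF u huT hgu
      rw [hf]
      simp only [div_eq_mul_inv]
      exact mul_le_mul_of_nonneg_right hcF (inv_nonneg.mpr hu0.le)
    -- integrability
    have hi2 : IntegrableOn f (Set.Ioc t (2*t)) := hint.mono_set hsubT
    have hi1 : IntegrableOn f (Set.Ioc (0:ℝ) δ) :=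
      hint.mono_set (Set.Ioc_subset_Ioc_right hδT)
    have hi3 : IntegrableOn (fun u : ℝ => c / u) (Set.Ioc t (2*t)) := by
      apply IntegrableOn.mono_set _ Set.Ioc_subset_Icc_self
      apply ContinuousOn.integrableOn_Icc
      apply ContinuousOn.div continuousOn_const continuousOn_id
      intro u hu
      exact ne_of_gt (lt_of_lt_of_le ht0 hu.1)
    have hval : ∫ u in Set.Ioc t (2*t), c / u = c * Real.log 2 := by
      have hle : t ≤ 2*t := by linarith
      rw [← intervalIntegral.integral_of_le hle]
      have : ∫ u in t..(2*t), c / u = c * ∫ u in t..(2*t), u⁻¹ := by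
        simp only [div_eq_mul_inv]
        exact intervalIntegral.integral_const_mul c _
      rw [this, integral_inv_of_pos ht0 (by linarith)]
      congr 1
      rw [mul_div_assoc, div_self (ne_of_gt ht0), mul_one]
    have hmono1 : ∫ u in Set.Ioc t (2*t), c / u ≤ ∫ u in Set.Ioc t (2*t), f u :=
      setIntegral_mono_on hi3 hi2 measurableSet_Ioc hptwise
    have hmono2 : ∫ u in Set.Ioc t (2*t), f u ≤ ∫ u in Set.Ioc (0:ℝ) δ, f u := by
      apply setIntegral_mono_set hi1 _ (HasSubset.Subset.eventuallyLE hsub)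
      rw [EventuallyLE, ae_restrict_iff' measurableSet_Ioc]
      filter_upwards with u hu
      exact hf_nonneg u ⟨hu.1, le_trans hu.2 hδT⟩
    linarith [hval ▸ hmono1, hmono2]
  -- Step B : the integral over (0, δ] tends to 0 along δ = T/(n+1)
  have hanti : Antitone (fun n : ℕ => Set.Ioc (0:ℝ) (T/(n+1))) := by
    intro i j hij
    apply Set.Ioc_subset_Ioc_right
    apply div_le_div_of_nonneg_left hT0.le (by positivity)
    have : (i:ℝ) ≤ (j:ℝ) := Nat.cast_le.mpr hij
    linarith
  have hInter : (⋂ n : ℕ, Set.Ioc (0:ℝ) (T/(n+1))) = ∅ := by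
    ext x
    simp only [Set.mem_iInter, Set.mem_Ioc, Set.mem_empty_iff_false, iff_false, not_forall]
    by_contra hall
    push_neg at hall
    obtain ⟨hx0, hx⟩ := hall 0
    obtain ⟨n, hn⟩ := exists_nat_gt (T / x)
    refine absurd ((hall n).2) (not_le.mpr ?_)
    rw [div_lt_iff₀ (by positivity)]
    calc T = (T / x) * x := (div_mul_cancel₀ T (ne_of_gt hx0)).symm
      _ < ((n:ℝ)+1) * x := by
          apply mul_lt_mul_of_pos_right _ hx0
          linarith
      _ = x * ((n:ℝ)+1) := by ring
  have hBnd : Tendsto (fun n : ℕ => ∫ u in Set.Ioc (0:ℝ) (T/((n:ℝ)+1)), f u) atTop (nhds 0) := by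
    have := tendsto_setIntegral_of_antitone (μ := volume) (f := f)
      (s := fun n : ℕ => Set.Ioc (0:ℝ) (T/((n:ℝ)+1)))
      (fun n => measurableSet_Ioc) hanti
      ⟨0, by
        apply hint.mono_set
        apply Set.Ioc_subset_Ioc_right
        simp⟩
    rwa [hInter, Measure.restrict_empty, integral_zero_measure] at this
  have hlow : ∀ n : ℕ, c * Real.log 2 ≤ ∫ u in Set.Ioc (0:ℝ) (T/((n:ℝ)+1)), f u := by
    intro n
    apply stepA
    · positivity
    · rw [div_le_iff₀ (by positivity)]
      nlinarith [hT0, (Nat.cast_nonneg n : (0:ℝ) ≤ (n:ℝ))]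
  have := ge_of_tendsto hBnd (Eventually.of_forall hlow)
  have hlog2 : 0 < Real.log 2 := Real.log_pos (by norm_num)
  nlinarith
end

section
/- Let H ∈ (0, 1), β > 0, and φ : (0, ∞) → (0, 1] non-decreasing with θ ↦ θ^{−1/β} φ(θ) increasing on (0, θ₀), θ₀ > 0, and inf{φ(θ)/θ^{1/β} : θ₀ ≤ θ ≤ C} > 0 for every C > 0. Let ξ : [e^e, ∞) → (0, ∞) be nondecreasing continuous with ξ(t)/t^H bounded, and suppose ∫_{e^e}^∞ (ξ(t)/t^H)^{−1/β} φ(ξ(t)/t^H) dt/t < ∞. Then lim_{t→∞} ξ(t)/t^H = 0. -/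
open MeasureTheory Real Filter

theorem stmt13 (H β θ₀ : ℝ) (hH : H ∈ Set.Ioo (0:ℝ) 1) (hβ : 0 < β) (hθ₀ : 0 < θ₀)
    (φ : ℝ → ℝ)
    (hφrange : ∀ θ : ℝ, 0 < θ → φ θ ∈ Set.Ioc (0:ℝ) 1)
    (hφmono : MonotoneOn φ (Set.Ioi (0:ℝ)))
    (hφinc : StrictMonoOn (fun θ : ℝ => θ ^ (-1 / β) * φ θ) (Set.Ioo 0 θ₀))
    (hinf : ∀ C : ℝ, 0 < C → ∃ m : ℝ, 0 < m ∧ ∀ θ ∈ Set.Icc θ₀ C, m ≤ φ θ / θ ^ (1 / β))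
    (ξ : ℝ → ℝ)
    (hξpos : ∀ t ∈ Set.Ici (exp (exp 1)), 0 < ξ t)
    (hξmono : MonotoneOn ξ (Set.Ici (exp (exp 1))))
    (hξcont : ContinuousOn ξ (Set.Ici (exp (exp 1))))
    (hbdd : ∃ C : ℝ, ∀ t ∈ Set.Ici (exp (exp 1)), ξ t / t ^ H ≤ C)
    (hint : IntegrableOn
      (fun t : ℝ => (ξ t / t ^ H) ^ (-1 / β) * φ (ξ t / t ^ H) / t)
      (Set.Ioi (exp (exp 1)))) :
    Tendsto (fun t : ℝ => ξ t / t ^ H) atTop (nhds 0) := by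
  obtain ⟨hH0, hH1⟩ := hH
  set a := exp (exp 1) with ha
  have ha0 : 0 < a := exp_pos _
  set g : ℝ → ℝ := fun t => ξ t / t ^ H with hg
  set F : ℝ → ℝ := fun t : ℝ => (ξ t / t ^ H) ^ (-1 / β) * φ (ξ t / t ^ H) / t with hF
  obtain ⟨C, hC⟩ := hbdd
  have hga : 0 < g a := div_pos (hξpos a (Set.mem_Ici.mpr le_rfl)) (rpow_pos_of_pos ha0 H)
  have hC0 : 0 < C := lt_of_lt_of_le hga (hC a (Set.mem_Ici.mpr le_rfl))
  by_contra hcon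
  rw [Metric.tendsto_nhds] at hcon
  push_neg at hcon
  obtain ⟨ε, hε, hfreq⟩ := hcon
  have h2H : (0:ℝ) < 2 ^ H := rpow_pos_of_pos two_pos H
  set θ₁ := ε / 2 ^ H with hθ₁
  have hθ₁0 : 0 < θ₁ := div_pos hε h2H
  have hφθ₁ : 0 < φ θ₁ := (hφrange θ₁ hθ₁0).1
  set c := C ^ (-1/β) * φ θ₁ with hc
  have hcpos : 0 < c := mul_pos (rpow_pos_of_pos hC0 _) hφθ₁
  -- interval integrability
  have hii : ∀ x y : ℝ, a ≤ x → x ≤ y → IntervalIntegrable F volume x y := by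
    intro x y hax hxy
    rw [intervalIntegrable_iff, Set.uIoc_of_le hxy]
    exact hint.mono_set (fun s hs => lt_of_le_of_lt hax hs.1)
  -- limit of tail contributions
  have hL : Tendsto (fun x : ℝ => ∫ s in a..x, F s) atTop
      (nhds (∫ s in Set.Ioi a, F s)) :=
    MeasureTheory.intervalIntegral_tendsto_integral_Ioi a hint tendsto_id
  have h2t_top : Tendsto (fun t : ℝ => 2 * t) atTop atTop :=
    tendsto_id.const_mul_atTop two_pos
  have hL2 : Tendsto (fun t : ℝ => ∫ s in a..(2*t), F s) atTop
      (nhds (∫ s in Set.Ioi a, F s)) := hL.comp h2t_top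
  have h0 : Tendsto (fun t : ℝ => (∫ s in a..(2*t), F s) - ∫ s in a..t, F s) atTop
      (nhds 0) := by
    simpa using hL2.sub hL
  have h0' : Tendsto (fun t : ℝ => ∫ s in t..(2*t), F s) atTop (nhds 0) := by
    apply h0.congr'
    filter_upwards [eventually_ge_atTop a] with t ht
    have ht0 : 0 < t := ha0.trans_le ht
    exact intervalIntegral.integral_interval_sub_left
      (hii a (2*t) le_rfl (by linarith)) (hii a t le_rfl ht)
  have hev : ∀ᶠ t in atTop, (∫ s in t..(2*t), F s) < c/2 :=
    h0'.eventually_lt_const (by positivity)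
  have hfreq' : ∃ᶠ t in atTop, ¬ dist (g t) 0 < ε := hfreq.mono fun _ h => not_lt.mpr h
  obtain ⟨t, hεt, hlt, hta⟩ :=
    (hfreq'.and_eventually (hev.and (eventually_ge_atTop a))).exists
  have ht0 : 0 < t := ha0.trans_le hta
  have hgt0 : 0 < g t := div_pos (hξpos t (Set.mem_Ici.mpr hta)) (rpow_pos_of_pos ht0 H)
  have hgt : ε ≤ g t := by
    have := not_lt.mp hεt
    rwa [Real.dist_eq, sub_zero, abs_of_pos hgt0] at this
  have key : ∀ s ∈ Set.Ioc t (2*t), c / (2*t) ≤ F s := by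
    intro s hs
    have hst : t < s := hs.1
    have hs2t : s ≤ 2*t := hs.2
    have hsa : a ≤ s := hta.trans hst.le
    have hs0 : 0 < s := ha0.trans_le hsa
    have hξs : 0 < ξ s := hξpos s (Set.mem_Ici.mpr hsa)
    have hsH : (0:ℝ) < s ^ H := rpow_pos_of_pos hs0 H
    have hgs0 : 0 < g s := div_pos hξs hsH
    have h2t : (0:ℝ) < 2*t := by linarith
    have h1 : θ₁ ≤ g s := by
      have hmono' : ξ t ≤ ξ s := hξmono (Set.mem_Ici.mpr hta) (Set.mem_Ici.mpr hsa) hst.le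
      have hpow : s ^ H ≤ (2*t) ^ H := rpow_le_rpow hs0.le hs2t hH0.le
      have e1 : (2*t) ^ H = 2 ^ H * t ^ H := mul_rpow (by norm_num) ht0.le
      calc θ₁ = ε / 2 ^ H := rfl
        _ ≤ g t / 2 ^ H := by gcongr
        _ = ξ t / (2*t) ^ H := by
            rw [e1, hg]; rw [div_div, mul_comm]
        _ ≤ ξ s / s ^ H := div_le_div₀ hξs.le hmono' hsH hpow
        _ = g s := rfl
    have h2 : C ^ (-1/β) ≤ (g s) ^ (-1/β) :=
      rpow_le_rpow_of_nonpos hgs0 (hC s (Set.mem_Ici.mpr hsa))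
        (by rw [neg_div]; exact neg_nonpos.mpr (by positivity))
    have h3 : φ θ₁ ≤ φ (g s) :=
      hφmono (Set.mem_Ioi.mpr hθ₁0) (Set.mem_Ioi.mpr hgs0) h1
    have hnum : c ≤ (g s) ^ (-1/β) * φ (g s) :=
      mul_le_mul h2 h3 hφθ₁.le (rpow_pos_of_pos hgs0 _).le
    calc c / (2*t) ≤ ((g s) ^ (-1/β) * φ (g s)) / s :=
          div_le_div₀ (hcpos.le.trans hnum) hnum hs0 hs2t
      _ = F s := rfl
  have hmeas : volume (Set.Ioc t (2*t)) = ENNReal.ofReal t := by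
    rw [Real.volume_Ioc]; congr 1; ring
  have hInt : IntegrableOn F (Set.Ioc t (2*t)) volume :=
    hint.mono_set (fun s hs => hta.trans_lt hs.1)
  have hge : c/(2*t) * (volume (Set.Ioc t (2*t))).toReal ≤ ∫ s in Set.Ioc t (2*t), F s :=
    setIntegral_ge_of_const_le_real measurableSet_Ioc
      (by rw [hmeas]; exact ENNReal.ofReal_ne_top) key hInt
  have htr : (volume (Set.Ioc t (2*t))).toReal = t := by
    rw [hmeas, ENNReal.toReal_ofReal ht0.le]
  have hfinal : c/2 ≤ ∫ s in t..(2*t), F s := by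
    rw [intervalIntegral.integral_of_le (by linarith : t ≤ 2*t)]
    calc c/2 = c/(2*t) * t := by field_simp
      _ = c/(2*t) * (volume (Set.Ioc t (2*t))).toReal := by rw [htr]
      _ ≤ ∫ s in Set.Ioc t (2*t), F s := hge
  linarith
end

section
/- Let β > 0 and K₂ ≥ 1, and let ψ : (0, 1) → (0, ∞) be convex with right derivative satisfying −K₂ θ^{−1−1/β} ≤ ψ′(θ) ≤ −(1/K₂) θ^{−1−1/β} on (0, 1/K₂); set φ = exp(−ψ). Then for every L > 0 and all θ ∈ (0, 1/(2K₂)) with ε := θ + L θ^{1+1/β} ≤ 2θ, one has φ(ε) ≥ φ(θ) · exp(L/(2^{1+1/β} K₂)). -/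
theorem stmt14 (β K₂ : ℝ) (hβ : 0 < β) (hK₂ : 1 ≤ K₂)
    (ψ ψ' : ℝ → ℝ)
    (hpos : ∀ θ ∈ Set.Ioo (0:ℝ) 1, 0 < ψ θ)
    (hconv : ConvexOn ℝ (Set.Ioo (0:ℝ) 1) ψ)
    (hderiv : ∀ θ ∈ Set.Ioo (0:ℝ) 1, HasDerivWithinAt ψ (ψ' θ) (Set.Ici θ) θ)
    (hbound : ∀ θ ∈ Set.Ioo (0:ℝ) (1 / K₂),
      -K₂ * θ ^ (-1 - 1 / β) ≤ ψ' θ ∧ ψ' θ ≤ -(1 / K₂) * θ ^ (-1 - 1 / β))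
    (φ : ℝ → ℝ) (hφ : ∀ θ, φ θ = Real.exp (-ψ θ)) :
    ∀ L : ℝ, 0 < L → ∀ θ ∈ Set.Ioo (0:ℝ) (1 / (2 * K₂)),
      θ + L * θ ^ (1 + 1 / β) ≤ 2 * θ →
      φ (θ + L * θ ^ (1 + 1 / β)) ≥ φ θ * Real.exp (L / (2 ^ (1 + 1 / β) * K₂)) := by
  intro L hL θ hθ hle
  obtain ⟨hθ0, hθ2K⟩ := hθ
  have hK₂0 : (0:ℝ) < K₂ := lt_of_lt_of_le one_pos hK₂
  set ε := θ + L * θ ^ (1 + 1 / β) with hε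
  clear_value ε
  have hpow : (0:ℝ) < θ ^ (1 + 1 / β) := Real.rpow_pos_of_pos hθ0 _
  have hθε : θ < ε := by
    have h0 : 0 < L * θ ^ (1 + 1 / β) := mul_pos hL hpow
    linarith [hε]
  have hεK : ε < 1 / K₂ := by
    have h2θ : 2 * θ < 1 / K₂ := by
      rw [lt_div_iff₀ hK₂0]
      rw [lt_div_iff₀ (by positivity : (0:ℝ) < 2 * K₂)] at hθ2K
      linarith
    linarith
  have hK2le : 1 / K₂ ≤ 1 := by
    rw [div_le_one hK₂0]; exact hK₂
  have hθ1 : θ < 1 := lt_of_lt_of_le (by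
    calc θ < ε := hθε
    _ < 1 / K₂ := hεK) hK2le
  have hε1 : ε < 1 := lt_of_lt_of_le hεK hK2le
  have hε0 : 0 < ε := lt_trans hθ0 hθε
  have hεm : ε ∈ Set.Ioo (0:ℝ) 1 := ⟨hε0, hε1⟩
  have hθm : θ ∈ Set.Ioo (0:ℝ) 1 := ⟨hθ0, hθ1⟩
  -- key slope inequality : slope θ ε ≤ ψ' ε
  have hslope : (ψ ε - ψ θ) / (ε - θ) ≤ ψ' ε := by
    have hd := hderiv ε hεm
    rw [hasDerivWithinAt_iff_tendsto_slope] at hd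
    have hset : Set.Ici ε \ {ε} = Set.Ioi ε := by
      ext x; simp [Set.mem_diff, lt_iff_le_and_ne, eq_comm, and_comm]
    rw [hset] at hd
    refine ge_of_tendsto hd ?_
    have hev : ∀ᶠ z in nhdsWithin ε (Set.Ioi ε), z ∈ Set.Ioo ε 1 := by
      have : Set.Ioo ε 1 ∈ nhdsWithin ε (Set.Ioi ε) :=
        Ioo_mem_nhdsGT_of_mem ⟨le_refl _, hε1⟩
      exact this
    filter_upwards [hev] with z hz
    have hzm : z ∈ Set.Ioo (0:ℝ) 1 := ⟨lt_trans hε0 hz.1, hz.2⟩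
    rw [slope_def_field]
    exact hconv.slope_mono_adjacent hθm hzm hθε hz.1
  have hψ'ε : ψ' ε ≤ -(1 / K₂) * ε ^ (-1 - 1 / β) := (hbound ε ⟨hε0, hεK⟩).2
  -- rpow comparison
  have hεrpow : (2 * θ) ^ (-1 - 1 / β) ≤ ε ^ (-1 - 1 / β) := by
    apply Real.rpow_le_rpow_of_nonpos hε0 hle
    have : 0 < 1 / β := by positivity
    linarith
  -- main inequality on ψ
  have hεθ : ε - θ = L * θ ^ (1 + 1 / β) := by rw [hε]; ring
  have hεθpos : 0 < ε - θ := by linarith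
  have key : ψ ε ≤ ψ θ - L / (2 ^ (1 + 1 / β) * K₂) := by
    have h1 : ψ ε - ψ θ ≤ (ε - θ) * ψ' ε := by
      have := (div_le_iff₀ hεθpos).mp hslope
      linarith [this]
    have h2 : (ε - θ) * ψ' ε ≤ (ε - θ) * (-(1 / K₂) * (2 * θ) ^ (-1 - 1 / β)) := by
      apply mul_le_mul_of_nonneg_left _ (le_of_lt hεθpos)
      calc ψ' ε ≤ -(1 / K₂) * ε ^ (-1 - 1 / β) := hψ'ε
      _ ≤ -(1 / K₂) * (2 * θ) ^ (-1 - 1 / β) := by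
          apply neg_le_neg_iff.mp
          rw [neg_mul, neg_neg, neg_mul, neg_neg]
          exact mul_le_mul_of_nonneg_left hεrpow (by positivity)
    have h3 : (ε - θ) * (-(1 / K₂) * (2 * θ) ^ (-1 - 1 / β))
        = - (L / (2 ^ (1 + 1 / β) * K₂)) := by
      have ht : θ ^ (1 + 1 / β) * θ ^ (-1 - 1 / β) = 1 := by
        rw [← Real.rpow_add hθ0]
        norm_num
      have h2r : (2:ℝ) ^ (-1 - 1/β) = ((2:ℝ) ^ (1 + 1/β))⁻¹ := by
        rw [show (-1 - 1/β : ℝ) = -(1 + 1/β) by ring, Real.rpow_neg (by norm_num)]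
      rw [hεθ, Real.mul_rpow (by norm_num) (le_of_lt hθ0), h2r]
      have hK₂ne : K₂ ≠ 0 := ne_of_gt hK₂0
      have hCne : ((2:ℝ) ^ (1 + 1/β)) ≠ 0 :=
        ne_of_gt (Real.rpow_pos_of_pos (by norm_num) _)
      linear_combination (-(L / (K₂ * (2:ℝ) ^ (1 + 1/β)))) * ht
    linarith
  rw [hφ, hφ, ← Real.exp_add]
  exact Real.exp_le_exp.mpr (by linarith)
end

section
/- Let β > 0, K₂ ≥ 1, and let ψ : (0, 1) → (0, ∞) be convex with ψ′(θ) ≤ −(1/K₂) θ^{−1−1/β} for θ ∈ (0, 1/K₂); set φ = exp(−ψ). Then for every a ∈ (0, 1/K₂), ∫_0^1 φ(v a) dv ≤ K₂ · a^{1/β} · φ(a). -/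
open intervalIntegral

theorem stmt15 (β K₂ : ℝ) (hβ : 0 < β) (hK₂ : 1 ≤ K₂)
    (ψ ψ' : ℝ → ℝ)
    (hpos : ∀ θ ∈ Set.Ioo (0:ℝ) 1, 0 < ψ θ)
    (hconv : ConvexOn ℝ (Set.Ioo (0:ℝ) 1) ψ)
    (hderiv : ∀ θ ∈ Set.Ioo (0:ℝ) 1, HasDerivWithinAt ψ (ψ' θ) (Set.Ici θ) θ)
    (hbound : ∀ θ ∈ Set.Ioo (0:ℝ) (1 / K₂), ψ' θ ≤ -(1 / K₂) * θ ^ (-1 - 1 / β))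
    (φ : ℝ → ℝ) (hφ : ∀ θ, φ θ = Real.exp (-ψ θ)) :
    ∀ a ∈ Set.Ioo (0:ℝ) (1 / K₂),
      (∫ v in (0:ℝ)..1, φ (v * a)) ≤ K₂ * a ^ (1 / β) * φ a := by
  intro a ha
  have hK₂0 : (0:ℝ) < K₂ := lt_of_lt_of_le one_pos hK₂
  have ha0 : 0 < a := ha.1
  have haK : a < 1 / K₂ := ha.2
  have ha1 : a < 1 := lt_of_lt_of_le haK (by rw [div_le_one hK₂0]; exact hK₂)
  have haI : a ∈ Set.Ioo (0:ℝ) 1 := ⟨ha0, ha1⟩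
  set c : ℝ := K₂ * a ^ (1 / β) with hc_def
  have hrpow_pos : (0:ℝ) < a ^ (1 / β) := Real.rpow_pos_of_pos ha0 _
  have hc : 0 < c := mul_pos hK₂0 hrpow_pos
  -- the key algebraic identity
  have hAlg : a * (1 / K₂ * a ^ (-1 - 1 / β)) = 1 / c := by
    have h1 : a * a ^ (-1 - 1 / β) = a ^ (-(1 / β)) := by
      calc a * a ^ (-1 - 1/β) = a ^ (1:ℝ) * a ^ (-1 - 1/β) := by rw [Real.rpow_one]
        _ = a ^ (1 + (-1 - 1/β)) := (Real.rpow_add ha0 _ _).symm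
        _ = a ^ (-(1/β)) := by ring_nf
    have h2 : a ^ (-(1 / β)) = (a ^ (1 / β))⁻¹ := by rw [Real.rpow_neg ha0.le]
    rw [mul_comm (1 / K₂), ← mul_assoc, h1, h2, hc_def]
    field_simp
  -- slope bound from convexity
  have hslope : ∀ x ∈ Set.Ioo (0:ℝ) 1, x < a → (ψ x - ψ a) / (x - a) ≤ ψ' a := by
    intro x hx hxa
    have hde : HasDerivWithinAt ψ (ψ' a) (Set.Ici a) a := hderiv a haI
    have htend : Filter.Tendsto (slope ψ a) (nhdsWithin a (Set.Ici a \ {a})) (nhds (ψ' a)) :=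
      hasDerivWithinAt_iff_tendsto_slope.mp hde
    rw [Set.Ici_sdiff_left] at htend
    have hkey : slope ψ a x ≤ ψ' a := by
      refine ge_of_tendsto htend ?_
      have hev1 : ∀ᶠ t in nhdsWithin a (Set.Ioi a), t < 1 :=
        Filter.Eventually.filter_mono nhdsWithin_le_nhds (eventually_lt_nhds ha1)
      filter_upwards [hev1, self_mem_nhdsWithin] with t ht1 ht2
      have hmono := hconv.slope_mono haI
      have hxS : x ∈ Set.Ioo (0:ℝ) 1 \ {a} := ⟨hx, by simp [ne_of_lt hxa]⟩
      have htS : t ∈ Set.Ioo (0:ℝ) 1 \ {a} :=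
        ⟨⟨lt_trans ha0 ht2, ht1⟩, by simp [(ne_of_gt (Set.mem_Ioi.mp ht2))]⟩
      exact hmono hxS htS (le_of_lt (lt_trans hxa ht2))
    rwa [slope_def_field] at hkey
  -- pointwise exponential bound on Ioc 0 1
  have hpt : ∀ v ∈ Set.Ioc (0:ℝ) 1,
      Real.exp (-ψ (v * a)) ≤ Real.exp (-ψ a) * Real.exp ((v - 1) / c) := by
    intro v hv
    rcases eq_or_lt_of_le hv.2 with hv1 | hv1
    · rw [hv1]; simp
    · set x := v * a with hx_def
      have hx0 : 0 < x := mul_pos hv.1 ha0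
      have hxa : x < a := by
        have := mul_lt_mul_of_pos_right hv1 ha0
        simpa [hx_def] using this
      have hxI : x ∈ Set.Ioo (0:ℝ) 1 := ⟨hx0, lt_trans hxa ha1⟩
      have hs := hslope x hxI hxa
      have hxa' : x - a < 0 := by linarith
      have h1 : ψ' a * (x - a) ≤ ψ x - ψ a := by
        rw [div_le_iff_of_neg hxa'] at hs
        linarith [hs]
      have h2 : ψ' a ≤ -(1 / K₂) * a ^ (-1 - 1 / β) := hbound a ha
      have hpow_pos : (0:ℝ) < a ^ (-1 - 1 / β) := Real.rpow_pos_of_pos ha0 _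
      have h3 : (1 - v) / c ≤ ψ' a * (x - a) := by
        have hxe : x - a = -((1 - v) * a) := by rw [hx_def]; ring
        have h4 : (-(1 / K₂) * a ^ (-1 - 1 / β)) * (x - a) ≤ ψ' a * (x - a) := by
          apply mul_le_mul_of_nonpos_right h2 (le_of_lt hxa')
        refine le_trans (le_of_eq ?_) h4
        rw [hxe]
        have : (1 - v) / c = (1 - v) * (1 / c) := by ring
        rw [this, ← hAlg]; ring
      have h5 : ψ a + (1 - v) / c ≤ ψ x := by linarith
      rw [← Real.exp_add, Real.exp_le_exp]
      have : (v - 1) / c = -((1 - v) / c) := by ring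
      rw [this]; linarith
  -- rewrite integrand
  have hfeq : (fun v : ℝ => φ (v * a)) = fun v => Real.exp (-ψ (v * a)) := by
    funext v; rw [hφ]
  rw [hfeq]
  -- continuity / integrability
  have hcψ : ContinuousOn ψ (Set.Ioo (0:ℝ) 1) := hconv.continuousOn isOpen_Ioo
  have hmaps : ∀ v ∈ Set.Ioc (0:ℝ) 1, v * a ∈ Set.Ioo (0:ℝ) 1 := by
    intro v hv
    refine ⟨mul_pos hv.1 ha0, ?_⟩
    calc v * a ≤ 1 * a := mul_le_mul_of_nonneg_right hv.2 ha0.le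
      _ = a := one_mul a
      _ < 1 := ha1
  have hcontF : ContinuousOn (fun v : ℝ => Real.exp (-ψ (v * a))) (Set.Ioc 0 1) := by
    apply Real.continuous_exp.comp_continuousOn
    apply ContinuousOn.neg
    exact hcψ.comp ((continuous_id.mul continuous_const).continuousOn) hmaps
  have hg_int : MeasureTheory.IntegrableOn
      (fun v : ℝ => Real.exp (-ψ a) * Real.exp ((v - 1) / c)) (Set.Ioc 0 1) := by
    apply Continuous.integrableOn_Ioc
    exact continuous_const.mul (Real.continuous_exp.comp
      ((continuous_id.sub continuous_const).div_const c))
  have hF_int : MeasureTheory.IntegrableOn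
      (fun v : ℝ => Real.exp (-ψ (v * a))) (Set.Ioc 0 1) := by
    apply MeasureTheory.Integrable.mono hg_int
    · exact hcontF.aestronglyMeasurable measurableSet_Ioc
    · rw [MeasureTheory.ae_restrict_iff' measurableSet_Ioc]
      filter_upwards with v hv
      rw [Real.norm_eq_abs, Real.norm_eq_abs, abs_of_pos (Real.exp_pos _),
        abs_of_pos (mul_pos (Real.exp_pos _) (Real.exp_pos _))]
      exact hpt v hv
  -- compare integrals
  have hmono_int : (∫ v in (0:ℝ)..1, Real.exp (-ψ (v * a)))
      ≤ ∫ v in (0:ℝ)..1, Real.exp (-ψ a) * Real.exp ((v - 1) / c) := by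
    rw [intervalIntegral.integral_of_le zero_le_one, intervalIntegral.integral_of_le zero_le_one]
    exact MeasureTheory.setIntegral_mono_on hF_int hg_int measurableSet_Ioc hpt
  -- compute the exponential integral via FTC
  have hftc : (∫ v in (0:ℝ)..1, Real.exp ((v - 1) / c))
      = c - c * Real.exp ((0 - 1) / c) := by
    have hD : ∀ v ∈ Set.uIcc (0:ℝ) 1,
        HasDerivAt (fun v : ℝ => c * Real.exp ((v - 1) / c)) (Real.exp ((v - 1) / c)) v := by
      intro v _
      have h1 : HasDerivAt (fun v : ℝ => (v - 1) / c) (1 / c) v := by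
        simpa using ((hasDerivAt_id v).sub_const 1).div_const c
      have h2 := h1.exp
      have h3 := h2.const_mul c
      convert h3 using 1
      rfl
      rfl
      rw [mul_comm (Real.exp _), ← mul_assoc, mul_one_div_cancel hc.ne', one_mul]
    have hInt : IntervalIntegrable (fun v : ℝ => Real.exp ((v - 1) / c))
        MeasureTheory.volume 0 1 := by
      apply Continuous.intervalIntegrable
      exact Real.continuous_exp.comp ((continuous_id.sub continuous_const).div_const c)
    have := intervalIntegral.integral_eq_sub_of_hasDerivAt hD hInt
    rw [this]
    simp
  have hcomp : (∫ v in (0:ℝ)..1, Real.exp (-ψ a) * Real.exp ((v - 1) / c))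
      = Real.exp (-ψ a) * (c - c * Real.exp ((0 - 1) / c)) := by
    rw [intervalIntegral.integral_const_mul, hftc]
  have hfinal : Real.exp (-ψ a) * (c - c * Real.exp ((0 - 1) / c)) ≤ c * Real.exp (-ψ a) := by
    have h1 : c - c * Real.exp ((0 - 1) / c) ≤ c := by
      have := mul_pos hc (Real.exp_pos ((0 - 1) / c))
      linarith
    calc Real.exp (-ψ a) * (c - c * Real.exp ((0 - 1) / c))
        ≤ Real.exp (-ψ a) * c := by
          exact mul_le_mul_of_nonneg_left h1 (Real.exp_pos _).le
      _ = c * Real.exp (-ψ a) := by ring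
  calc (∫ v in (0:ℝ)..1, Real.exp (-ψ (v * a)))
      ≤ Real.exp (-ψ a) * (c - c * Real.exp ((0 - 1) / c)) := by rw [← hcomp]; exact hmono_int
    _ ≤ c * Real.exp (-ψ a) := hfinal
    _ = K₂ * a ^ (1 / β) * φ a := by rw [hφ, hc_def]
end

section
/- Let (A_i)_{i∈J}, J ⊆ ℕ, be events on a probability space. Suppose there exist K ≥ 0 and ε > 0 such that for all i ∈ J, Σ_{j∈J, j<i} P(A_i ∩ A_j) ≤ P(A_i) (K + (1+ε) Σ_{j∈J, j<i} P(A_j)), and suppose Σ_{i∈J} P(A_i) ≥ (1 + 2K)/ε. Then P(∪_{i∈J} A_i) ≥ (1 + 2ε)^{−1}. -/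
open MeasureTheory ENNReal

lemma tri_sum (F : Finset ℕ) (f : ℕ → ℕ → ℝ) (hsymm : ∀ i j, f i j = f j i) :
    ∑ i ∈ F, ∑ j ∈ F, f i j
      = ∑ i ∈ F, f i i + 2 * ∑ i ∈ F, ∑ j ∈ F.filter (· < i), f i j := by
  have h1 : ∀ i ∈ F, ∑ j ∈ F, f i j
      = f i i + (∑ j ∈ F.filter (· < i), f i j + ∑ j ∈ F.filter (i < ·), f i j) := by
    intro i hi
    have : ∀ j, f i j = (if j = i then f i j else 0)
        + ((if j < i then f i j else 0) + (if i < j then f i j else 0)) := by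
      intro j
      rcases lt_trichotomy j i with h | h | h
      · simp [h, h.ne, asymm h]
      · simp [h]
      · simp [h, h.ne', asymm h]
    calc ∑ j ∈ F, f i j = ∑ j ∈ F, ((if j = i then f i j else 0)
        + ((if j < i then f i j else 0) + (if i < j then f i j else 0))) :=
          Finset.sum_congr rfl fun j _ => this j
      _ = _ := by
          rw [Finset.sum_add_distrib, Finset.sum_add_distrib, Finset.sum_ite_eq' F i (f i),
            if_pos hi, ← Finset.sum_filter, ← Finset.sum_filter]
  have hswap : ∑ i ∈ F, ∑ j ∈ F.filter (i < ·), f i j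
      = ∑ i ∈ F, ∑ j ∈ F.filter (· < i), f i j := by
    calc ∑ i ∈ F, ∑ j ∈ F.filter (i < ·), f i j
        = ∑ i ∈ F, ∑ j ∈ F, if i < j then f i j else 0 := by
          simp [Finset.sum_filter]
      _ = ∑ j ∈ F, ∑ i ∈ F, if i < j then f i j else 0 := Finset.sum_comm
      _ = ∑ j ∈ F, ∑ i ∈ F.filter (· < j), f i j := by simp [Finset.sum_filter]
      _ = ∑ i ∈ F, ∑ j ∈ F.filter (· < i), f i j :=
          Finset.sum_congr rfl fun i _ => Finset.sum_congr rfl fun j _ => hsymm j i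
  rw [Finset.sum_congr rfl h1, Finset.sum_add_distrib, Finset.sum_add_distrib, hswap]
  ring

lemma cs_lemma {Ω : Type*} [MeasurableSpace Ω] (μ : Measure Ω) (f : Ω → ℝ≥0∞)
    (hf : Measurable f) (U : Set Ω) (hU : MeasurableSet U)
    (h0 : ∀ a, a ∉ U → f a = 0) :
    (∫⁻ a, f a ∂μ) ^ 2 ≤ (∫⁻ a, f a * f a ∂μ) * μ U := by
  set g : Ω → ℝ≥0∞ := U.indicator 1 with hg
  have hfg : ∀ a, f a * g a = f a := by
    intro a
    by_cases ha : a ∈ U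
    · simp [hg, Set.indicator_of_mem ha]
    · simp [h0 a ha, hg]
  have hpq : Real.HolderConjugate 2 2 := Real.HolderConjugate.two_two
  have hgm : Measurable g := (measurable_one.indicator hU)
  have H := ENNReal.lintegral_mul_le_Lp_mul_Lq μ hpq hf.aemeasurable hgm.aemeasurable
  simp only [Pi.mul_apply, hfg] at H
  have hf2 : ∀ a, f a ^ (2:ℝ) = f a * f a := by
    intro a
    rw [show (2:ℝ) = ((2:ℕ):ℝ) by norm_num, ENNReal.rpow_natCast]
    ring
  have hg2 : ∫⁻ a, g a ^ (2:ℝ) ∂μ = μ U := by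
    have : ∀ a, g a ^ (2:ℝ) = g a := by
      intro a
      by_cases ha : a ∈ U <;> simp [hg, ha]
    simp_rw [this]
    exact lintegral_indicator_one hU
  simp_rw [hf2, hg2] at H
  calc (∫⁻ a, f a ∂μ) ^ 2
      ≤ ((∫⁻ a, f a * f a ∂μ) ^ (1/2:ℝ) * μ U ^ (1/2:ℝ)) ^ 2 := pow_le_pow_left' H 2
    _ = (∫⁻ a, f a * f a ∂μ) * μ U := by
        rw [mul_pow, ← ENNReal.rpow_natCast (_ ^ (1/2:ℝ)) 2, ← ENNReal.rpow_natCast (_ ^ (1/2:ℝ)) 2,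
          ← ENNReal.rpow_mul, ← ENNReal.rpow_mul]
        norm_num

theorem stmt16 {Ω : Type*} [MeasurableSpace Ω] (μ : Measure Ω) [IsProbabilityMeasure μ]
    (J : Set ℕ) [DecidablePred (· ∈ J)] (A : ℕ → Set Ω)
    (hA : ∀ i, MeasurableSet (A i))
    (K ε : ℝ) (hK : 0 ≤ K) (hε : 0 < ε)
    (hpair : ∀ i ∈ J,
      ∑ j ∈ (Finset.range i).filter (· ∈ J), (μ (A i ∩ A j)).toReal ≤
        (μ (A i)).toReal *
          (K + (1 + ε) * ∑ j ∈ (Finset.range i).filter (· ∈ J), (μ (A j)).toReal))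
    (hsum : ENNReal.ofReal ((1 + 2 * K) / ε) ≤ ∑' i : J, μ (A i)) :
    ENNReal.ofReal ((1 + 2 * ε)⁻¹) ≤ μ (⋃ i ∈ J, A i) := by
  have hS0 : ∀ n : ℕ, 0 ≤ ∑ i ∈ (Finset.range n).filter (· ∈ J), (μ (A i)).toReal :=
    fun n => Finset.sum_nonneg fun i _ => ENNReal.toReal_nonneg
  -- Claim A : second moment bound for each n
  have claimA : ∀ n : ℕ,
      ENNReal.ofReal ((∑ i ∈ (Finset.range n).filter (· ∈ J), (μ (A i)).toReal) /
        ((1 + 2*K) + (1+ε) * ∑ i ∈ (Finset.range n).filter (· ∈ J), (μ (A i)).toReal))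
        ≤ μ (⋃ i ∈ J, A i) := by
    intro n
    set Fn : Finset ℕ := (Finset.range n).filter (· ∈ J) with hFn
    set S : ℝ := ∑ i ∈ Fn, (μ (A i)).toReal with hSdef
    rcases eq_or_lt_of_le (hS0 n) with hS | hSpos
    · rw [← hSdef] at hS
      simp [← hS]
    rw [← hSdef] at hSpos
    set f : Ω → ℝ≥0∞ := fun a => ∑ i ∈ Fn, (A i).indicator 1 a with hfdef
    have hfm : Measurable f :=
      Finset.measurable_sum _ fun i _ => measurable_one.indicator (hA i)
    set U' : Set Ω := ⋃ i ∈ Fn, A i with hU'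
    have hU'm : MeasurableSet U' := Fn.measurableSet_biUnion fun i _ => hA i
    have h0 : ∀ a, a ∉ U' → f a = 0 := by
      intro a ha
      refine Finset.sum_eq_zero fun i hi => ?_
      have : a ∉ A i := fun h => ha (Set.mem_biUnion hi h)
      simp [Set.indicator_of_notMem this]
    have hL1 : ∫⁻ a, f a ∂μ = ∑ i ∈ Fn, μ (A i) := by
      rw [hfdef, lintegral_finset_sum _ fun i _ => measurable_one.indicator (hA i)]
      exact Finset.sum_congr rfl fun i _ => lintegral_indicator_one (hA i)
    have hL2 : ∫⁻ a, f a * f a ∂μ = ∑ i ∈ Fn, ∑ j ∈ Fn, μ (A i ∩ A j) := by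
      have hff : ∀ a, f a * f a = ∑ i ∈ Fn, ∑ j ∈ Fn, (A i ∩ A j).indicator 1 a := by
        intro a
        rw [hfdef]
        rw [Finset.sum_mul_sum]
        exact Finset.sum_congr rfl fun i _ => Finset.sum_congr rfl fun j _ =>
          (congrFun Set.inter_indicator_one a).symm
      simp_rw [hff]
      rw [lintegral_finset_sum _ fun i _ => Finset.measurable_sum _ fun j _ =>
        measurable_one.indicator ((hA i).inter (hA j))]
      refine Finset.sum_congr rfl fun i _ => ?_
      rw [lintegral_finset_sum _ fun j _ => measurable_one.indicator ((hA i).inter (hA j))]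
      exact Finset.sum_congr rfl fun j _ => lintegral_indicator_one ((hA i).inter (hA j))
    have hcs := cs_lemma μ f hfm U' hU'm h0
    rw [hL1, hL2] at hcs
    have hT_ne : (∑ i ∈ Fn, ∑ j ∈ Fn, μ (A i ∩ A j)) ≠ ∞ :=
      (ENNReal.sum_lt_top.mpr fun i _ =>
        ENNReal.sum_lt_top.mpr fun j _ => measure_lt_top μ _).ne
    have hreal : S^2 ≤ (∑ i ∈ Fn, ∑ j ∈ Fn, (μ (A i ∩ A j)).toReal) * (μ U').toReal := by
      have h1 := ENNReal.toReal_mono (ENNReal.mul_ne_top hT_ne (measure_ne_top μ U')) hcs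
      rw [ENNReal.toReal_pow, ENNReal.toReal_mul,
        ENNReal.toReal_sum (fun i _ => measure_ne_top μ _)] at h1
      have hTr : (∑ i ∈ Fn, ∑ j ∈ Fn, μ (A i ∩ A j)).toReal
          = ∑ i ∈ Fn, ∑ j ∈ Fn, (μ (A i ∩ A j)).toReal := by
        rw [ENNReal.toReal_sum (fun i _ =>
          (ENNReal.sum_lt_top.mpr fun j _ => measure_lt_top μ _).ne)]
        exact Finset.sum_congr rfl fun i _ => ENNReal.toReal_sum fun j _ => measure_ne_top μ _
      rw [hTr] at h1
      rw [hSdef]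
      exact h1
    -- bound the double sum
    have hfilt : ∀ i ∈ Fn, Fn.filter (· < i) = (Finset.range i).filter (· ∈ J) := by
      intro i hi
      have hin : i < n := Finset.mem_range.mp (Finset.mem_filter.mp hi).1
      ext j
      constructor
      · intro hj
        have h1 := Finset.mem_filter.mp hj
        have h2 := Finset.mem_filter.mp h1.1
        exact Finset.mem_filter.mpr ⟨Finset.mem_range.mpr h1.2, h2.2⟩
      · intro hj
        have h1 := Finset.mem_filter.mp hj
        have hji := Finset.mem_range.mp h1.1
        refine Finset.mem_filter.mpr ⟨?_, hji⟩
        exact Finset.mem_filter.mpr ⟨Finset.mem_range.mpr (hji.trans hin), h1.2⟩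
    have htri := tri_sum Fn (fun i j => (μ (A i ∩ A j)).toReal)
      (fun i j => by show (μ (A i ∩ A j)).toReal = (μ (A j ∩ A i)).toReal; rw [Set.inter_comm])
    have hB : ∑ i ∈ Fn, ∑ j ∈ Fn.filter (· < i), (μ (A i ∩ A j)).toReal
        ≤ K * S + (1+ε) * ∑ i ∈ Fn, (μ (A i)).toReal * ∑ j ∈ Fn.filter (· < i), (μ (A j)).toReal := by
      have hle : ∀ i ∈ Fn, ∑ j ∈ Fn.filter (· < i), (μ (A i ∩ A j)).toReal
          ≤ (μ (A i)).toReal * (K + (1+ε) * ∑ j ∈ Fn.filter (· < i), (μ (A j)).toReal) := by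
        intro i hi
        have hiJ : i ∈ J := by
          rw [hFn] at hi
          exact (Finset.mem_filter.mp hi).2
        have h2 := hpair i hiJ
        rw [← hfilt i hi] at h2
        exact h2
      calc ∑ i ∈ Fn, ∑ j ∈ Fn.filter (· < i), (μ (A i ∩ A j)).toReal
          ≤ ∑ i ∈ Fn, (μ (A i)).toReal * (K + (1+ε) * ∑ j ∈ Fn.filter (· < i), (μ (A j)).toReal) :=
            Finset.sum_le_sum hle
        _ = K * S + (1+ε) * ∑ i ∈ Fn, (μ (A i)).toReal * ∑ j ∈ Fn.filter (· < i), (μ (A j)).toReal := by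
            rw [hSdef, Finset.mul_sum, Finset.mul_sum, ← Finset.sum_add_distrib]
            exact Finset.sum_congr rfl fun i _ => by ring
    have hsq := tri_sum Fn (fun i j => (μ (A i)).toReal * (μ (A j)).toReal)
      (fun i j => mul_comm _ _)
    have hsq' : S * S = ∑ i ∈ Fn, (μ (A i)).toReal * (μ (A i)).toReal
        + 2 * ∑ i ∈ Fn, (μ (A i)).toReal * ∑ j ∈ Fn.filter (· < i), (μ (A j)).toReal := by
      rw [hSdef, Finset.sum_mul_sum, hsq]
      congr 1
      congr 1
      exact Finset.sum_congr rfl fun i _ => (Finset.mul_sum _ _ _).symm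
    have hC : 2 * ∑ i ∈ Fn, (μ (A i)).toReal * ∑ j ∈ Fn.filter (· < i), (μ (A j)).toReal
        ≤ S * S := by
      have hnn : 0 ≤ ∑ i ∈ Fn, (μ (A i)).toReal * (μ (A i)).toReal :=
        Finset.sum_nonneg fun i _ => mul_self_nonneg _
      linarith [hsq']
    have hTbound : ∑ i ∈ Fn, ∑ j ∈ Fn, (μ (A i ∩ A j)).toReal
        ≤ S + 2*K*S + (1+ε) * (S * S) := by
      rw [htri]
      have hd : ∑ i ∈ Fn, (μ (A i ∩ A i)).toReal = S := by
        rw [hSdef]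
        exact Finset.sum_congr rfl fun i _ => by rw [Set.inter_self]
      rw [hd]
      have h2 : (1+ε) * (2 * ∑ i ∈ Fn, (μ (A i)).toReal * ∑ j ∈ Fn.filter (· < i), (μ (A j)).toReal)
          ≤ (1+ε) * (S * S) := mul_le_mul_of_nonneg_left hC (by linarith)
      linarith [hB, h2]
    have hdpos : (0:ℝ) < (1 + 2*K) + (1+ε) * S := by nlinarith
    have hkey : S ≤ ((1 + 2*K) + (1+ε) * S) * (μ U').toReal := by
      have hM : S^2 ≤ (S + 2*K*S + (1+ε) * (S * S)) * (μ U').toReal :=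
        hreal.trans (mul_le_mul_of_nonneg_right hTbound ENNReal.toReal_nonneg)
      have h6 : S * S ≤ S * (((1 + 2*K) + (1+ε) * S) * (μ U').toReal) := by nlinarith [hM]
      exact le_of_mul_le_mul_left h6 hSpos
    have hsub : U' ⊆ ⋃ i ∈ J, A i := by
      rw [hU']
      refine Set.iUnion₂_subset fun i hi => ?_
      have hiJ : i ∈ J := by
        rw [hFn] at hi
        exact (Finset.mem_filter.mp hi).2
      exact Set.subset_iUnion₂ (s := fun i (_ : i ∈ J) => A i) i hiJ
    have hMle : (μ U').toReal ≤ (μ (⋃ i ∈ J, A i)).toReal :=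
      ENNReal.toReal_mono (measure_ne_top μ _) (measure_mono hsub)
    rw [ENNReal.ofReal_le_iff_le_toReal (measure_ne_top μ _), div_le_iff₀ hdpos]
    have h7 : ((1 + 2*K) + (1+ε) * S) * (μ U').toReal
        ≤ ((1 + 2*K) + (1+ε) * S) * (μ (⋃ i ∈ J, A i)).toReal :=
      mul_le_mul_of_nonneg_left hMle hdpos.le
    linarith [hkey, h7]
  -- Claim B : partial sums get arbitrarily close to (1+2K)/ε
  have hiSup : ENNReal.ofReal ((1 + 2*K) / ε)
      ≤ ⨆ n : ℕ, ∑ i ∈ (Finset.range n).filter (· ∈ J), μ (A i) := by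
    calc ENNReal.ofReal ((1 + 2*K) / ε) ≤ ∑' i : J, μ (A i) := hsum
      _ = ∑' i : ℕ, J.indicator (fun i => μ (A i)) i := tsum_subtype J (fun i => μ (A i))
      _ = ⨆ n : ℕ, ∑ i ∈ Finset.range n, J.indicator (fun i => μ (A i)) i :=
          ENNReal.tsum_eq_iSup_nat
      _ = ⨆ n : ℕ, ∑ i ∈ (Finset.range n).filter (· ∈ J), μ (A i) := by
          refine iSup_congr fun n => ?_
          rw [Finset.sum_filter]
          exact Finset.sum_congr rfl fun i _ => by
            by_cases h : i ∈ J <;> simp [Set.indicator_apply, h]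
  have hexists : ∀ r : ℝ, r < (1 + 2*K) / ε →
      ∃ n : ℕ, r < ∑ i ∈ (Finset.range n).filter (· ∈ J), (μ (A i)).toReal := by
    intro r hr
    by_cases hr0 : r < 0
    · exact ⟨0, lt_of_lt_of_le hr0 (hS0 0)⟩
    push_neg at hr0
    have hcpos : 0 < (1 + 2*K) / ε := div_pos (by linarith) hε
    have h1 : ENNReal.ofReal r < ⨆ n : ℕ, ∑ i ∈ (Finset.range n).filter (· ∈ J), μ (A i) :=
      lt_of_lt_of_le ((ENNReal.ofReal_lt_ofReal_iff hcpos).mpr hr) hiSup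
    rw [lt_iSup_iff] at h1
    obtain ⟨n, hn⟩ := h1
    refine ⟨n, ?_⟩
    have hne : (∑ i ∈ (Finset.range n).filter (· ∈ J), μ (A i)) ≠ ∞ :=
      (ENNReal.sum_lt_top.mpr fun i _ => measure_lt_top μ _).ne
    have h2 := (ENNReal.ofReal_lt_iff_lt_toReal hr0 hne).mp hn
    rwa [ENNReal.toReal_sum (fun i _ => measure_ne_top μ _)] at h2
  -- conclusion
  rw [ENNReal.ofReal_le_iff_le_toReal (measure_ne_top μ _)]
  refine le_of_forall_lt fun x hx => ?_
  by_cases hx0 : x < 0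
  · exact lt_of_lt_of_le hx0 ENNReal.toReal_nonneg
  push_neg at hx0
  have h2ε : (0:ℝ) < 1 + 2*ε := by linarith
  have hx1 : x * (1 + 2*ε) < 1 := by
    have := mul_lt_mul_of_pos_right hx h2ε
    rwa [inv_mul_cancel₀ (ne_of_gt h2ε)] at this
  have hden : (0:ℝ) < 1 - (1+ε) * x := by nlinarith
  have hrc : x * (1 + 2*K) / (1 - (1+ε) * x) < (1 + 2*K) / ε := by
    rw [div_lt_div_iff₀ hden hε]
    nlinarith [mul_pos (show (0:ℝ) < 1 + 2*K by linarith)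
      (show (0:ℝ) < 1 - x * (1 + 2*ε) by linarith)]
  obtain ⟨n, hrn⟩ := hexists _ hrc
  set S : ℝ := ∑ i ∈ (Finset.range n).filter (· ∈ J), (μ (A i)).toReal with hSdef
  have hA' := claimA n
  rw [ENNReal.ofReal_le_iff_le_toReal (measure_ne_top μ _)] at hA'
  have hSnn : (0:ℝ) ≤ S := by rw [hSdef]; exact hS0 n
  have hd : (0:ℝ) < (1 + 2*K) + (1+ε) * S := by nlinarith [hSnn]
  have hxg : x < S / ((1 + 2*K) + (1+ε) * S) := by
    rw [lt_div_iff₀ hd]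
    have h5 : x * (1 + 2*K) < S * (1 - (1+ε) * x) := by
      have heq : x * (1 + 2*K) / (1 - (1+ε) * x) * (1 - (1+ε) * x) = x * (1 + 2*K) := by
        exact div_mul_cancel₀ _ (ne_of_gt hden)
      have h8 := mul_lt_mul_of_pos_right hrn hden
      linarith [h8, heq]
    nlinarith
  exact lt_of_lt_of_le hxg hA'
end

section
/- Let β ∈ (0, 1), γ > 0, H = β − γ > 0, and let ξ : (0, e^{−e}] → (0, ∞) be nondecreasing continuous with lim_{t→0+} ξ(t)/t^H = 0. Define sequences by t_1 = e^{−e} and, given t_n > 0, u_{n+1} = inf{u < t_n : u + t_n^{γ/β} ξ(u)^{1/β} ≥ t_n}, v_{n+1} = inf{u < t_n : ξ(u)(1 + L (ξ(u)/u^H)^{1/β}) ≥ ξ(t_n)} for a fixed constant L > 0, and t_{n+1} = max{u_{n+1}, v_{n+1}} (assuming these infima are positive so the recursion is well defined). Then (t_n) is strictly decreasing and lim_{n→∞} t_n = 0. -/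
open Real Filter Topology

/-- If a set of reals has positive infimum and all its elements are `< b`,
then its infimum is `< b`. -/
lemma aux_sInf_lt {S : Set ℝ} {b : ℝ} (h : 0 < sInf S) (hb : ∀ x ∈ S, x < b) :
    sInf S < b := by
  rcases Set.eq_empty_or_nonempty S with rfl | hne
  · rw [Real.sInf_empty] at h; exact absurd h (lt_irrefl 0)
  · by_cases hbdd : BddBelow S
    · obtain ⟨x, hx⟩ := hne
      exact lt_of_le_of_lt (csInf_le hbdd hx) (hb x hx)
    · rw [Real.sInf_of_not_bddBelow hbdd] at h; exact absurd h (lt_irrefl 0)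

/-- Anything strictly below a positive infimum is not in the set. -/
lemma aux_not_mem {S : Set ℝ} {x : ℝ} (h : 0 < sInf S) (hx : x < sInf S) : x ∉ S := by
  intro hmem
  by_cases hbdd : BddBelow S
  · exact absurd (csInf_le hbdd hmem) (not_le.mpr hx)
  · rw [Real.sInf_of_not_bddBelow hbdd] at h; exact absurd h (lt_irrefl 0)

theorem stmt19 (β γ H L : ℝ)
    (hβ : β ∈ Set.Ioo (0:ℝ) 1) (hγ : 0 < γ) (hH : H = β - γ) (hHpos : 0 < H) (hL : 0 < L)
    (ξ : ℝ → ℝ)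
    (hξpos : ∀ s ∈ Set.Ioc (0:ℝ) (exp (-exp 1)), 0 < ξ s)
    (hξmono : MonotoneOn ξ (Set.Ioc (0:ℝ) (exp (-exp 1))))
    (hξcont : ContinuousOn ξ (Set.Ioc (0:ℝ) (exp (-exp 1))))
    (hlim : Tendsto (fun s : ℝ => ξ s / s ^ H) (nhdsWithin 0 (Set.Ioi 0)) (nhds 0))
    (t u v : ℕ → ℝ)
    (ht1 : t 1 = exp (-exp 1))
    (hu : ∀ n : ℕ, 1 ≤ n →
      u (n + 1) = sInf {x : ℝ | x < t n ∧ t n ≤ x + (t n) ^ (γ / β) * (ξ x) ^ (1 / β)})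
    (hv : ∀ n : ℕ, 1 ≤ n →
      v (n + 1) = sInf {x : ℝ | x < t n ∧ ξ (t n) ≤ ξ x * (1 + L * (ξ x / x ^ H) ^ (1 / β))})
    (ht : ∀ n : ℕ, 1 ≤ n → t (n + 1) = max (u (n + 1)) (v (n + 1)))
    (hupos : ∀ n : ℕ, 1 ≤ n → 0 < u (n + 1))
    (hvpos : ∀ n : ℕ, 1 ≤ n → 0 < v (n + 1)) :
    (∀ n : ℕ, 1 ≤ n → t (n + 1) < t n) ∧ Tendsto t atTop (nhds 0) := by
  have hβ0 : 0 < β := hβ.1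
  set T : ℝ := exp (-exp 1) with hTdef
  have hTpos : 0 < T := exp_pos _
  -- Part 1: strict decrease
  have key : ∀ n : ℕ, 1 ≤ n → t (n + 1) < t n := by
    intro n hn
    rw [ht n hn]
    have h1 : u (n + 1) < t n := by
      have hp := hupos n hn
      rw [hu n hn] at hp ⊢
      exact aux_sInf_lt hp (fun x hx => hx.1)
    have h2 : v (n + 1) < t n := by
      have hp := hvpos n hn
      rw [hv n hn] at hp ⊢
      exact aux_sInf_lt hp (fun x hx => hx.1)
    exact max_lt h1 h2
  refine ⟨key, ?_⟩
  -- Part 2: convergence to 0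
  set s : ℕ → ℝ := fun n => t (n + 1) with hsdef
  have hs_anti : StrictAnti s := by
    apply strictAnti_nat_of_succ_lt
    intro n
    exact key (n + 1) (by omega)
  have hs_pos : ∀ n, 0 < s n := by
    intro n
    cases n with
    | zero => simpa [hsdef, ht1] using hTpos
    | succ m =>
      have : t (m + 1 + 1) = max (u (m + 1 + 1)) (v (m + 1 + 1)) := ht (m + 1) (by omega)
      have hvp := hvpos (m + 1) (by omega)
      simp only [hsdef]
      rw [this]
      exact lt_of_lt_of_le hvp (le_max_right _ _)
  have hbdd : BddBelow (Set.range s) := by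
    refine ⟨0, ?_⟩
    rintro x ⟨n, rfl⟩
    exact (hs_pos n).le
  set a : ℝ := ⨅ n, s n with hadef
  have hs_tendsto : Tendsto s atTop (𝓝 a) := tendsto_atTop_ciInf hs_anti.antitone hbdd
  have ht_tendsto : Tendsto t atTop (𝓝 a) := (tendsto_add_atTop_iff_nat 1).mp hs_tendsto
  have ha_nonneg : 0 ≤ a := le_ciInf (fun n => (hs_pos n).le)
  -- suffices to show a = 0
  rcases eq_or_lt_of_le ha_nonneg with heq | hapos
  · rwa [← heq] at ht_tendsto
  exfalso
  -- basic facts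
  have ha_le : ∀ n : ℕ, 1 ≤ n → a ≤ t n := by
    intro n hn
    obtain ⟨m, rfl⟩ : ∃ m, n = m + 1 := ⟨n - 1, by omega⟩
    exact ciInf_le hbdd m
  have ht_le_T : ∀ n : ℕ, 1 ≤ n → t n ≤ T := by
    intro n hn
    induction n with
    | zero => omega
    | succ m ih =>
      rcases Nat.lt_or_ge m 1 with hm | hm
      · interval_cases m
        · exact le_of_eq ht1
      · exact le_trans (key m hm).le (ih hm)
  have ht_mem : ∀ n : ℕ, 1 ≤ n → t n ∈ Set.Ioc (0:ℝ) T := by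
    intro n hn
    exact ⟨lt_of_lt_of_le hapos (ha_le n hn), ht_le_T n hn⟩
  have ha_mem : a ∈ Set.Ioc (0:ℝ) T := by
    refine ⟨hapos, ?_⟩
    calc a ≤ s 0 := ciInf_le hbdd 0
    _ = T := ht1
  have hξa_pos : 0 < ξ a := hξpos a ha_mem
  -- the two constants
  set c₁ : ℝ := a ^ (γ / β) * (ξ a) ^ (1 / β) with hc1def
  have hc1pos : 0 < c₁ :=
    mul_pos (rpow_pos_of_pos hapos _) (rpow_pos_of_pos hξa_pos _)
  set c₂ : ℝ := ξ a * (L * (ξ a / T ^ H) ^ (1 / β)) with hc2def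
  have hc2pos : 0 < c₂ :=
    mul_pos hξa_pos (mul_pos hL (rpow_pos_of_pos (div_pos hξa_pos (rpow_pos_of_pos hTpos _)) _))
  -- Case A: limiting inequality for u
  have hcaseA : ∀ n : ℕ, 1 ≤ n → t (n + 1) = u (n + 1) →
      t (n + 1) + (t n) ^ (γ / β) * (ξ (t (n + 1))) ^ (1 / β) ≤ t n := by
    intro n hn heq
    set w : ℝ := t (n + 1) with hwdef
    have hw_pos : 0 < w := lt_of_lt_of_le hapos (ha_le (n + 1) (by omega))
    have hw_lt : w < t n := key n hn
    have hw_mem : w ∈ Set.Ioc (0:ℝ) T := ht_mem (n + 1) (by omega)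
    have hsinf : 0 < sInf {x : ℝ | x < t n ∧ t n ≤ x + (t n) ^ (γ / β) * (ξ x) ^ (1 / β)} := by
      rw [← hu n hn]; exact hupos n hn
    have hweq : w = sInf {x : ℝ | x < t n ∧ t n ≤ x + (t n) ^ (γ / β) * (ξ x) ^ (1 / β)} :=
      heq.trans (hu n hn)
    have hstrict : ∀ x ∈ Set.Ioo (0:ℝ) w,
        x + (t n) ^ (γ / β) * (ξ x) ^ (1 / β) ≤ t n := by
      intro x hx
      have hxnot := aux_not_mem hsinf (hweq ▸ hx.2)
      simp only [Set.mem_setOf_eq, not_and, not_le] at hxnot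
      exact (hxnot (lt_trans hx.2 hw_lt)).le
    -- continuity and limit
    have hξw : Tendsto ξ (𝓝[Set.Ioo (0:ℝ) w] w) (𝓝 (ξ w)) := by
      have hc : ContinuousWithinAt ξ (Set.Ioc (0:ℝ) T) w := hξcont.continuousWithinAt hw_mem
      exact hc.mono (fun x hx => ⟨hx.1, le_trans hx.2.le (le_trans hw_lt.le (ht_le_T n hn))⟩)
    have hrpow : Tendsto (fun x => (ξ x) ^ (1 / β)) (𝓝[Set.Ioo (0:ℝ) w] w)
        (𝓝 ((ξ w) ^ (1 / β))) :=
      ((Real.continuousAt_rpow_const (ξ w) (1 / β)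
        (Or.inl (hξpos w hw_mem).ne')).tendsto).comp hξw
    have hid : Tendsto (fun x : ℝ => x) (𝓝[Set.Ioo (0:ℝ) w] w) (𝓝 w) :=
      tendsto_id.mono_left nhdsWithin_le_nhds
    have hg : Tendsto (fun x => x + (t n) ^ (γ / β) * (ξ x) ^ (1 / β))
        (𝓝[Set.Ioo (0:ℝ) w] w) (𝓝 (w + (t n) ^ (γ / β) * (ξ w) ^ (1 / β))) :=
      hid.add (tendsto_const_nhds.mul hrpow)
    have hev : ∀ᶠ x in 𝓝[Set.Ioo (0:ℝ) w] w,
        x + (t n) ^ (γ / β) * (ξ x) ^ (1 / β) ≤ t n :=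
      eventually_mem_nhdsWithin.mono hstrict
    rw [nhdsWithin_Ioo_eq_nhdsLT hw_pos] at hg hev
    exact le_of_tendsto hg hev
  -- Case B: limiting inequality for v
  have hcaseB : ∀ n : ℕ, 1 ≤ n → t (n + 1) = v (n + 1) →
      ξ (t (n + 1)) * (1 + L * (ξ (t (n + 1)) / (t (n + 1)) ^ H) ^ (1 / β)) ≤ ξ (t n) := by
    intro n hn heq
    set w : ℝ := t (n + 1) with hwdef
    have hw_pos : 0 < w := lt_of_lt_of_le hapos (ha_le (n + 1) (by omega))
    have hw_lt : w < t n := key n hn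
    have hw_mem : w ∈ Set.Ioc (0:ℝ) T := ht_mem (n + 1) (by omega)
    have hsinf : 0 < sInf {x : ℝ | x < t n ∧
        ξ (t n) ≤ ξ x * (1 + L * (ξ x / x ^ H) ^ (1 / β))} := by
      rw [← hv n hn]; exact hvpos n hn
    have hweq : w = sInf {x : ℝ | x < t n ∧
        ξ (t n) ≤ ξ x * (1 + L * (ξ x / x ^ H) ^ (1 / β))} :=
      heq.trans (hv n hn)
    have hstrict : ∀ x ∈ Set.Ioo (0:ℝ) w,
        ξ x * (1 + L * (ξ x / x ^ H) ^ (1 / β)) ≤ ξ (t n) := by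
      intro x hx
      have hxnot := aux_not_mem hsinf (hweq ▸ hx.2)
      simp only [Set.mem_setOf_eq, not_and, not_le] at hxnot
      exact (hxnot (lt_trans hx.2 hw_lt)).le
    -- continuity and limit
    have hξw : Tendsto ξ (𝓝[Set.Ioo (0:ℝ) w] w) (𝓝 (ξ w)) := by
      have hc : ContinuousWithinAt ξ (Set.Ioc (0:ℝ) T) w := hξcont.continuousWithinAt hw_mem
      exact hc.mono (fun x hx => ⟨hx.1, le_trans hx.2.le (le_trans hw_lt.le (ht_le_T n hn))⟩)
    have hpowH : Tendsto (fun x : ℝ => x ^ H) (𝓝[Set.Ioo (0:ℝ) w] w) (𝓝 (w ^ H)) :=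
      ((Real.continuousAt_rpow_const w H (Or.inl hw_pos.ne')).tendsto).comp
        (tendsto_id.mono_left nhdsWithin_le_nhds)
    have hdiv : Tendsto (fun x : ℝ => ξ x / x ^ H) (𝓝[Set.Ioo (0:ℝ) w] w)
        (𝓝 (ξ w / w ^ H)) := hξw.div hpowH (rpow_pos_of_pos hw_pos H).ne'
    have hrpow : Tendsto (fun x : ℝ => (ξ x / x ^ H) ^ (1 / β)) (𝓝[Set.Ioo (0:ℝ) w] w)
        (𝓝 ((ξ w / w ^ H) ^ (1 / β))) :=
      ((Real.continuousAt_rpow_const (ξ w / w ^ H) (1 / β)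
        (Or.inl (div_pos (hξpos w hw_mem) (rpow_pos_of_pos hw_pos H)).ne')).tendsto).comp hdiv
    have hg : Tendsto (fun x => ξ x * (1 + L * (ξ x / x ^ H) ^ (1 / β)))
        (𝓝[Set.Ioo (0:ℝ) w] w)
        (𝓝 (ξ w * (1 + L * (ξ w / w ^ H) ^ (1 / β)))) :=
      hξw.mul (tendsto_const_nhds.add (tendsto_const_nhds.mul hrpow))
    have hev : ∀ᶠ x in 𝓝[Set.Ioo (0:ℝ) w] w,
        ξ x * (1 + L * (ξ x / x ^ H) ^ (1 / β)) ≤ ξ (t n) :=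
      eventually_mem_nhdsWithin.mono hstrict
    rw [nhdsWithin_Ioo_eq_nhdsLT hw_pos] at hg hev
    exact le_of_tendsto hg hev
  -- Quantitative versions
  have hA : ∀ n : ℕ, 1 ≤ n → t (n + 1) = u (n + 1) → c₁ ≤ t n - t (n + 1) := by
    intro n hn heq
    have h1 := hcaseA n hn heq
    have htn_mem := ht_mem n hn
    have htn1_mem := ht_mem (n + 1) (by omega)
    have ha_tn : a ≤ t n := ha_le n hn
    have ha_tn1 : a ≤ t (n + 1) := ha_le (n + 1) (by omega)
    have h2 : a ^ (γ / β) ≤ (t n) ^ (γ / β) :=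
      rpow_le_rpow hapos.le ha_tn (by positivity)
    have h3 : (ξ a) ^ (1 / β) ≤ (ξ (t (n + 1))) ^ (1 / β) :=
      rpow_le_rpow hξa_pos.le (hξmono ha_mem htn1_mem ha_tn1) (by positivity)
    have h4 : c₁ ≤ (t n) ^ (γ / β) * (ξ (t (n + 1))) ^ (1 / β) := by
      rw [hc1def]
      exact mul_le_mul h2 h3 (rpow_pos_of_pos hξa_pos _).le (rpow_pos_of_pos
        (lt_of_lt_of_le hapos ha_tn) _).le
    linarith
  have hB : ∀ n : ℕ, 1 ≤ n → t (n + 1) = v (n + 1) → ξ (t (n + 1)) + c₂ ≤ ξ (t n) := by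
    intro n hn heq
    have h1 := hcaseB n hn heq
    have htn1_mem := ht_mem (n + 1) (by omega)
    have ha_tn1 : a ≤ t (n + 1) := ha_le (n + 1) (by omega)
    have hξw_pos : 0 < ξ (t (n + 1)) := hξpos _ htn1_mem
    have hξaw : ξ a ≤ ξ (t (n + 1)) := hξmono ha_mem htn1_mem ha_tn1
    have hwH_pos : 0 < (t (n + 1)) ^ H := rpow_pos_of_pos htn1_mem.1 H
    have hwH_le : (t (n + 1)) ^ H ≤ T ^ H :=
      rpow_le_rpow htn1_mem.1.le htn1_mem.2 hHpos.le
    have hdivle : ξ a / T ^ H ≤ ξ (t (n + 1)) / (t (n + 1)) ^ H :=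
      div_le_div₀ hξw_pos.le hξaw hwH_pos hwH_le
    have hrle : (ξ a / T ^ H) ^ (1 / β) ≤ (ξ (t (n + 1)) / (t (n + 1)) ^ H) ^ (1 / β) :=
      rpow_le_rpow (div_pos hξa_pos (rpow_pos_of_pos hTpos _)).le hdivle (by positivity)
    have h2 : c₂ ≤ ξ (t (n + 1)) * (L * (ξ (t (n + 1)) / (t (n + 1)) ^ H) ^ (1 / β)) := by
      rw [hc2def]
      refine mul_le_mul hξaw ?_ ?_ hξw_pos.le
      · exact mul_le_mul_of_nonneg_left hrle hL.le
      · positivity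
    nlinarith [mul_pos hξw_pos hL]
  -- differences tend to 0
  have hdiff : Tendsto (fun n => t n - t (n + 1)) atTop (𝓝 0) := by
    have := ht_tendsto.sub hs_tendsto
    simpa using this
  obtain ⟨N, hN⟩ := (hdiff.eventually_lt_const hc1pos).exists_forall_of_atTop
  set M : ℕ := max N 1 with hMdef
  -- for all n ≥ M, case B must hold
  have hBall : ∀ n : ℕ, M ≤ n → ξ (t (n + 1)) + c₂ ≤ ξ (t n) := by
    intro n hn
    have hn1 : 1 ≤ n := le_trans (le_max_right N 1) hn
    have hnN : N ≤ n := le_trans (le_max_left N 1) hn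
    rcases max_choice (u (n + 1)) (v (n + 1)) with hc | hc
    · exfalso
      have := hA n hn1 (by rw [ht n hn1]; exact hc)
      have := hN n hnN
      linarith
    · exact hB n hn1 (by rw [ht n hn1]; exact hc)
  -- iterate to contradiction
  have hiter : ∀ k : ℕ, ξ (t (M + k)) ≤ ξ (t M) - k * c₂ := by
    intro k
    induction k with
    | zero => simp
    | succ m ih =>
      have h1 := hBall (M + m) (Nat.le_add_right M m)
      have : M + (m + 1) = M + m + 1 := by omega
      rw [this]
      push_cast
      linarith
  have hM1 : 1 ≤ M := le_max_right N 1
  obtain ⟨k, hk⟩ := exists_nat_gt ((ξ (t M) - ξ a) / c₂)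
  have hk2 : ξ (t M) - ξ a < k * c₂ := by
    rw [div_lt_iff₀ hc2pos] at hk
    linarith
  have hklow : ξ a ≤ ξ (t (M + k)) :=
    hξmono ha_mem (ht_mem (M + k) (by omega)) (ha_le (M + k) (by omega))
  have := hiter k
  linarith
end
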